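/- Let v_{i-1}, v_i, v_{i+1} be real numbers with b = v_{i+1} - v_i ≠ 0 and r = (v_i - v_{i-1})/b, and suppose r ≤ 0 (non-monotone data at x_i). Then for every β with 0 ≤ β ≤ 1/(1 - r), the value P(β) = β·(3v_i - v_{i-1})/2 + (1-β)·(v_i + v_{i+1})/2 satisfies min(v_{i-1}, v_i, v_{i+1}) ≤ P(β) ≤ max(v_{i-1}, v_i, v_{i+1}). -/
import Mathlib


theorem stmt_16 (vm v vp : ℝ) (hb : vp - v ≠ 0)
    (r : ℝ) (hr : r = (v - vm) / (vp - v)) (hr0 : r ≤ 0)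
    (β : ℝ) (h0 : 0 ≤ β) (h1 : β ≤ 1 / (1 - r)) :
    min (min vm v) vp ≤ β * (3 * v - vm) / 2 + (1 - β) * (v + vp) / 2 ∧
      β * (3 * v - vm) / 2 + (1 - β) * (v + vp) / 2 ≤ max (max vm v) vp := by
  have h1r : (0:ℝ) < 1 - r := by linarith
  have hβ1 : β * (1 - r) ≤ 1 := by
    have := (le_div_iff₀ h1r).mp h1
    linarith
  have hvm : v - vm = r * (vp - v) := by
    field_simp at hr
    linarith
  have ht0 : 0 ≤ 1 - β * (1 - r) := by linarith
  have ht1 : 0 ≤ β * (1 - r) := mul_nonneg h0 (le_of_lt h1r)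
  rcases lt_or_gt_of_ne hb with hneg | hpos
  · -- vp < v
    have hvP : vp ≤ β * (3 * v - vm) / 2 + (1 - β) * (v + vp) / 2 := by
      nlinarith [mul_nonneg ht0 (by linarith : (0:ℝ) ≤ v - vp),
        mul_nonneg ht1 (by linarith : (0:ℝ) ≤ v - vp)]
    have hPv : β * (3 * v - vm) / 2 + (1 - β) * (v + vp) / 2 ≤ v := by
      nlinarith [mul_nonneg ht0 (by linarith : (0:ℝ) ≤ v - vp)]
    constructor
    · exact le_trans (min_le_right _ _) hvP
    · exact le_trans hPv (le_trans (le_max_right vm v) (le_max_left _ _))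
  · -- v < vp
    have hvP : v ≤ β * (3 * v - vm) / 2 + (1 - β) * (v + vp) / 2 := by
      nlinarith [mul_nonneg ht0 (by linarith : (0:ℝ) ≤ vp - v)]
    have hPv : β * (3 * v - vm) / 2 + (1 - β) * (v + vp) / 2 ≤ vp := by
      nlinarith [mul_nonneg ht0 (by linarith : (0:ℝ) ≤ vp - v),
        mul_nonneg ht1 (by linarith : (0:ℝ) ≤ vp - v)]
    constructor
    · exact le_trans (le_trans (min_le_left _ _) (min_le_right _ _)) hvP
    · exact le_trans hPv (le_max_right _ _)
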